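/- A hypercentral group G is finitely discriminable if and only if its centre Z(G) is finitely discriminable. -/

import Mathlib

/-- A group `G` is finitely discriminable if there is a finite subset
`F ⊆ G \ {1}` such that every non-trivial normal subgroup of `G` contains an
element of `F`. -/
def FinDisc (G : Type*) [Group G] : Prop :=
  ∃ F : Finset G, (1 : G) ∉ F ∧ ∀ N : Subgroup G, N.Normal → N ≠ ⊥ → ∃ g ∈ F, g ∈ N

/-- A group `G` is hypercentral if its transfinite ascending central series
reaches `G` at some ordinal. -/
def IsHypercentral (G : Type*) [Group G] : Prop :=
  ∃ (a : Ordinal.{0}) (Z : Ordinal.{0} → Subgroup G),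
    Z 0 = ⊥ ∧
    (∀ b : Ordinal.{0}, ∀ x : G, x ∈ Z (Order.succ b) ↔
        ∀ g : G, x * g * x⁻¹ * g⁻¹ ∈ Z b) ∧
    (∀ b : Ordinal.{0}, Order.IsSuccLimit b → Z b = ⨆ c : {c : Ordinal.{0} // c < b}, Z c.1) ∧
    Z a = ⊤

theorem hypercentral_center_meet {G : Type*} [Group G]
    (hG : IsHypercentral G) (N : Subgroup G) (hN : N.Normal) (hNbot : N ≠ ⊥) :
    ∃ x : G, x ≠ 1 ∧ x ∈ N ∧ x ∈ Subgroup.center G := by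
  obtain ⟨a, Z, h0, hsucc, hlim, htop⟩ := hG
  have key : ∀ b : Ordinal, (Z b).Normal ∧ ∀ c : Ordinal, c < b → Z c ≤ Z b := by
    intro b
    induction b using Ordinal.induction with
    | _ b IH =>
      rcases Ordinal.zero_or_succ_or_isSuccLimit b with h | ⟨d, rfl⟩ | hb
      · subst h
        exact ⟨h0 ▸ inferInstance, fun c hc => absurd hc (not_lt_zero (a := c))⟩
      · have hd := IH d (Order.lt_succ d)
        have hdn : (Z d).Normal := hd.1
        have hstep : Z d ≤ Z (Order.succ d) := by
          intro x hx
          rw [hsucc]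
          intro g
          have h1 : g * x⁻¹ * g⁻¹ ∈ Z d := hdn.conj_mem _ (inv_mem hx) g
          have : x * (g * x⁻¹ * g⁻¹) ∈ Z d := mul_mem hx h1
          convert this using 1; group
        constructor
        · constructor
          intro n hn g
          rw [hsucc]
          intro h
          have h1 : n * (g⁻¹ * h * g) * n⁻¹ * (g⁻¹ * h * g)⁻¹ ∈ Z d :=
            (hsucc d n).mp hn (g⁻¹ * h * g)
          have h2 : g * (n * (g⁻¹ * h * g) * n⁻¹ * (g⁻¹ * h * g)⁻¹) * g⁻¹ ∈ Z d :=
            hdn.conj_mem _ h1 g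
          convert h2 using 1; group
        · intro c hc
          rcases (Order.lt_succ_iff_eq_or_lt.mp hc) with rfl | hlt
          · exact hstep
          · exact le_trans (hd.2 c hlt) hstep
      · have heq := hlim b hb
        have hle : ∀ c1 c2 : Ordinal, c2 < b → c1 ≤ c2 → Z c1 ≤ Z c2 := by
          intro c1 c2 h2 h12
          rcases h12.lt_or_eq with h | rfl
          · exact (IH c2 h2).2 c1 h
          · exact le_rfl
        have hdir : Directed (· ≤ ·) (fun c : {c : Ordinal // c < b} => Z c.1) := by
          rintro ⟨c1, hc1⟩ ⟨c2, hc2⟩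
          exact ⟨⟨max c1 c2, max_lt hc1 hc2⟩,
            hle _ _ (max_lt hc1 hc2) (le_max_left _ _),
            hle _ _ (max_lt hc1 hc2) (le_max_right _ _)⟩
        have hne : Nonempty {c : Ordinal // c < b} := ⟨⟨0, hb.pos⟩⟩
        constructor
        · constructor
          intro n hn g
          rw [heq] at hn ⊢
          rw [Subgroup.mem_iSup_of_directed hdir] at hn ⊢
          obtain ⟨⟨c, hc⟩, hcn⟩ := hn
          exact ⟨⟨c, hc⟩, (IH c hc).1.conj_mem _ hcn g⟩
        · intro c hc
          rw [heq]
          exact le_iSup (fun c : {c : Ordinal // c < b} => Z c.1) ⟨c, hc⟩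
  have hmono : ∀ c d : Ordinal, c ≤ d → Z c ≤ Z d := by
    intro c d h
    rcases h.lt_or_eq with h | rfl
    · exact (key d).2 c h
    · exact le_rfl
  set S : Set Ordinal := {b | ∃ x : G, x ≠ 1 ∧ x ∈ N ∧ x ∈ Z b} with hS
  have hSne : S.Nonempty := by
    obtain ⟨x, hx1⟩ := Subgroup.ne_bot_iff_exists_ne_one.mp hNbot
    exact ⟨a, x.1, fun h => hx1 (Subtype.ext h), x.2, htop ▸ Subgroup.mem_top _⟩
  set b := Ordinal.lt_wf.min S hSne with hbdef
  have hbS : b ∈ S := Ordinal.lt_wf.min_mem S hSne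
  have hmin : ∀ c, c < b → c ∉ S := fun c hc hcS =>
    Ordinal.lt_wf.not_lt_min S hcS hc
  obtain ⟨x, hx1, hxN, hxZ⟩ := hbS
  rcases Ordinal.zero_or_succ_or_isSuccLimit b with h | ⟨d, hbd⟩ | hb
  · rw [h, h0, Subgroup.mem_bot] at hxZ
    exact absurd hxZ hx1
  · rw [← hbd, hsucc] at hxZ
    refine ⟨x, hx1, hxN, Subgroup.mem_center_iff.mpr fun g => ?_⟩
    have hyN : x * g * x⁻¹ * g⁻¹ ∈ N := by
      have h1 : g * x⁻¹ * g⁻¹ ∈ N := hN.conj_mem _ (inv_mem hxN) g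
      have := mul_mem hxN h1
      convert this using 1; group
    have hy1 : x * g * x⁻¹ * g⁻¹ = 1 := by
      by_contra hne
      exact hmin d (hbd ▸ Order.lt_succ d) ⟨_, hne, hyN, hxZ g⟩
    have h2 : x * g * x⁻¹ = g := by
      rwa [mul_inv_eq_one] at hy1
    calc g * x = (x * g * x⁻¹) * x := by rw [h2]
    _ = x * g := by group
  · have heq := hlim b hb
    have hdir : Directed (· ≤ ·) (fun c : {c : Ordinal // c < b} => Z c.1) := by
      rintro ⟨c1, hc1⟩ ⟨c2, hc2⟩
      exact ⟨⟨max c1 c2, max_lt hc1 hc2⟩, hmono _ _ (le_max_left _ _),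
        hmono _ _ (le_max_right _ _)⟩
    have hne : Nonempty {c : Ordinal // c < b} := ⟨⟨0, hb.pos⟩⟩
    rw [heq, Subgroup.mem_iSup_of_directed hdir] at hxZ
    obtain ⟨⟨c, hc⟩, hcx⟩ := hxZ
    exact absurd ⟨x, hx1, hxN, hcx⟩ (hmin c hc)


/-- A hypercentral group is finitely discriminable if and only if its centre is
finitely discriminable. -/
theorem hypercentral_finDisc_iff_center {G : Type*} [Group G]
    (hG : IsHypercentral G) : FinDisc G ↔ FinDisc (Subgroup.center G) := by
  constructor
  · rintro ⟨F, h1F, hF⟩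
    refine ⟨F.preimage (Subtype.val) (Subtype.val_injective.injOn), ?_, ?_⟩
    · intro h
      exact h1F (by simpa using Finset.mem_preimage.mp h)
    · intro M hM hMbot
      set N := M.map (Subgroup.center G).subtype with hNdef
      have hNle : N ≤ Subgroup.center G := by
        rintro _ ⟨m, hm, rfl⟩
        exact m.2
      have hNnormal : N.Normal := by
        constructor
        intro n hn g
        have hnc := Subgroup.mem_center_iff.mp (hNle hn) g
        have : g * n * g⁻¹ = n := by rw [hnc]; group
        rwa [this]
      have hNbot : N ≠ ⊥ := by
        intro h
        apply hMbot
        rwa [Subgroup.map_eq_bot_iff_of_injective M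
          (Subgroup.center G).subtype_injective] at h
      obtain ⟨g, hgF, hgN⟩ := hF N hNnormal hNbot
      obtain ⟨m, hmM, rfl⟩ := hgN
      exact ⟨m, Finset.mem_preimage.mpr hgF, hmM⟩
  · rintro ⟨F, h1F, hF⟩
    haveI := Classical.decEq G
    refine ⟨F.image (Subtype.val), ?_, ?_⟩
    · intro h
      obtain ⟨m, hm, hm1⟩ := Finset.mem_image.mp h
      have : m = 1 := Subtype.ext hm1
      exact h1F (this ▸ hm)
    · intro N hN hNbot
      obtain ⟨x, hx1, hxN, hxc⟩ := hypercentral_center_meet hG N hN hNbot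
      set M := N.comap (Subgroup.center G).subtype with hMdef
      have hMbot : M ≠ ⊥ := by
        intro h
        have : (⟨x, hxc⟩ : Subgroup.center G) ∈ M := hxN
        rw [h, Subgroup.mem_bot] at this
        exact hx1 (congrArg Subtype.val this)
      obtain ⟨m, hmF, hmM⟩ := hF M (Subgroup.normal_of_comm M) hMbot
      exact ⟨m.1, Finset.mem_image.mpr ⟨m, hmF, rfl⟩, hmM⟩
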